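/- Let H be a group with a length function ℓ, let A be the free abelian group with basis { a_h : h ∈ H, h ≠ 1 }, let V = A ≀ H be the restricted wreath product, and let Y = { a_h : h ∈ H, h ≠ 1 } ∪ { a_h^{ℓ(h)} h : h ∈ H, h ≠ 1 } ⊆ V. Then Y generates V, and for every non-trivial element h of H, viewed as an element of V, the word length of h with respect to Y satisfies |h|_Y = ℓ(h) + 1. -/

import Mathlib

/-- `ℓ` is a length function on the group `H`. -/
def IsLengthFunction {H : Type*} [Group H] (ℓ : H → ℕ) : Prop :=
  (∀ h : H, ℓ h = 0 ↔ h = 1) ∧ (∀ h : H, ℓ h⁻¹ = ℓ h) ∧ ∀ g h : H, ℓ (g * h) ≤ ℓ g + ℓ h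

/-- The word length of `g` with respect to a generating set `X`: the least length of a word in
`X ∪ X⁻¹` representing `g`. -/
noncomputable def wordLength {G : Type*} [Group G] (X : Set G) (g : G) : ℕ :=
  sInf {n | ∃ l : List G, l.length = n ∧ (∀ x ∈ l, x ∈ X ∨ x⁻¹ ∈ X) ∧ l.prod = g}

/-- The additive automorphism of the base `H →₀ A` of a wreath product given by right
translation of the domain: `(b ∘ f)(x) = f (x * b)`. -/
noncomputable def wreathShift {H : Type*} [Group H] {A : Type*} [AddCommGroup A] (b : H) :
    (H →₀ A) ≃+ (H →₀ A) := Finsupp.domCongr (Equiv.mulRight b).symm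

@[simp] theorem wreathShift_apply {H : Type*} [Group H] {A : Type*} [AddCommGroup A]
    (b : H) (f : H →₀ A) (x : H) : wreathShift b f x = f (x * b) := by
  simp [wreathShift, Finsupp.domCongr_apply]

/-- The action of `H` on the (multiplicative) base of the wreath product `A ≀ H`. -/
noncomputable def wreathAction (H : Type*) [Group H] (A : Type*) [AddCommGroup A] :
    H →* MulAut (Multiplicative (H →₀ A)) where
  toFun b := AddEquiv.toMultiplicative (wreathShift b)
  map_one' := by
    refine MulEquiv.ext fun f => ?_
    refine Finsupp.ext fun x => ?_
    show Finsupp.equivMapDomain (Equiv.mulRight (1 : H)).symm (Multiplicative.toAdd f) x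
        = (Multiplicative.toAdd f) x
    simp [Finsupp.equivMapDomain_apply]
  map_mul' := by
    intro a b
    refine MulEquiv.ext fun f => ?_
    refine Finsupp.ext fun x => ?_
    show Finsupp.equivMapDomain (Equiv.mulRight (a * b)).symm (Multiplicative.toAdd f) x
        = Finsupp.equivMapDomain (Equiv.mulRight a).symm
            (Finsupp.equivMapDomain (Equiv.mulRight b).symm (Multiplicative.toAdd f)) x
    simp [Finsupp.equivMapDomain_apply, mul_assoc]

/-- The wreath product `A ≀ H` of an additive abelian group `A` (the lamp group, written
multiplicatively) by a group `H`, realized as a semidirect product of the base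
`H →₀ A` by `H`. -/
noncomputable def WreathProd (A : Type*) [AddCommGroup A] (H : Type*) [Group H] :=
  (Multiplicative (H →₀ A)) ⋊[wreathAction H A] H

noncomputable instance (A : Type*) [AddCommGroup A] (H : Type*) [Group H] :
    Group (WreathProd A H) :=
  inferInstanceAs (Group ((Multiplicative (H →₀ A)) ⋊[wreathAction H A] H))

/-- The embedding of the base into the wreath product. -/
noncomputable def wreathBase {A : Type*} [AddCommGroup A] {H : Type*} [Group H]
    (w : H →₀ A) : WreathProd A H :=
  SemidirectProduct.inl (Multiplicative.ofAdd w)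

/-- The embedding of `H` into the wreath product. -/
noncomputable def wreathRight {A : Type*} [AddCommGroup A] {H : Type*} [Group H]
    (h : H) : WreathProd A H :=
  SemidirectProduct.inr h

/-- The wreath product `V = A ≀ H` where `A` is the free abelian group with basis
`{a_h : h ∈ H \ {1}}`. -/
noncomputable abbrev WreathV (H : Type*) [Group H] : Type _ :=
  WreathProd ({h : H // h ≠ 1} →₀ ℤ) H

/-- The basis element `a_h` of the base of `V`, raised to the power `m`. -/
noncomputable def aPow {H : Type*} [Group H] (h : H) (hh : h ≠ 1) (m : ℤ) : WreathV H :=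
  wreathBase (Finsupp.single (1 : H) (Finsupp.single (⟨h, hh⟩ : {h : H // h ≠ 1}) m))

/-- The generating set `Y = { a_h, a_h^{ℓ(h)} h ∣ h ∈ H \ {1} }` of `V`. -/
noncomputable def genSetY {H : Type*} [Group H] (ℓ : H → ℕ) : Set (WreathV H) :=
  {v | ∃ (h : H) (hh : h ≠ 1), v = aPow h hh 1} ∪
    {v | ∃ (h : H) (hh : h ≠ 1), v = aPow h hh (ℓ h : ℤ) * wreathRight h}

-- auxiliary development

section Aux
variable {H : Type*} [Group H] {A : Type*} [AddCommGroup A]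

/-- lamp configuration of an element of the wreath product -/
noncomputable def wlamp (v : WreathProd A H) : H →₀ A :=
  Multiplicative.toAdd (SemidirectProduct.left (v : (Multiplicative (H →₀ A)) ⋊[wreathAction H A] H))

/-- projection to `H` -/
def wrt (v : WreathProd A H) : H :=
  SemidirectProduct.right (v : (Multiplicative (H →₀ A)) ⋊[wreathAction H A] H)

@[simp] lemma wlamp_mul (v w : WreathProd A H) :
    wlamp (v * w) = wlamp v + wreathShift (wrt v) (wlamp w) := rfl

@[simp] lemma wrt_mul (v w : WreathProd A H) : wrt (v * w) = wrt v * wrt w := rfl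

@[simp] lemma wlamp_base (w : H →₀ A) : wlamp (wreathBase w) = w := rfl
@[simp] lemma wrt_base (w : H →₀ A) : wrt (wreathBase w) = 1 := rfl
@[simp] lemma wlamp_right (h : H) : wlamp (wreathRight h : WreathProd A H) = 0 := rfl
@[simp] lemma wrt_right (h : H) : wrt (wreathRight h : WreathProd A H) = h := rfl

@[simp] lemma wlamp_inv (v : WreathProd A H) :
    wlamp (v⁻¹) = wreathShift (wrt v)⁻¹ (- wlamp v) := rfl

@[simp] lemma wrt_inv (v : WreathProd A H) : wrt (v⁻¹) = (wrt v)⁻¹ := rfl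

lemma wreath_ext {v w : WreathProd A H} (h1 : wlamp v = wlamp w) (h2 : wrt v = wrt w) :
    v = w :=
  SemidirectProduct.ext (Multiplicative.toAdd.injective h1) h2

lemma wreathShift_single (b : H) (y : H) (a : A) :
    wreathShift b (Finsupp.single y a) = Finsupp.single (y * b⁻¹) a := by
  ext x
  rw [wreathShift_apply]
  by_cases hc : y = x * b
  · have hc2 : y * b⁻¹ = x := by rw [hc]; group
    simp [Finsupp.single_apply, hc, hc2]
  · have hc2 : y * b⁻¹ ≠ x := fun h => hc (by rw [← h]; group)
    simp [Finsupp.single_apply, hc, hc2]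

end Aux

section Gen
variable {H : Type*} [Group H]

@[simp] lemma wlamp_aPow (g : H) (hg : g ≠ 1) (m : ℤ) :
    wlamp (aPow g hg m)
      = Finsupp.single (1 : H) (Finsupp.single (⟨g, hg⟩ : {h : H // h ≠ 1}) m) := rfl

@[simp] lemma wrt_aPow (g : H) (hg : g ≠ 1) (m : ℤ) : wrt (aPow g hg m) = 1 := rfl

lemma wreathBase_zero {A : Type*} [AddCommGroup A] :
    (wreathBase (0 : H →₀ A) : WreathProd A H) = 1 := by
  unfold wreathBase
  rw [show Multiplicative.ofAdd (0 : H →₀ A) = 1 from rfl, map_one]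
  rfl

lemma wreathBase_add {A : Type*} [AddCommGroup A] (w w' : H →₀ A) :
    (wreathBase (w + w') : WreathProd A H) = wreathBase w * wreathBase w' := by
  unfold wreathBase
  rw [show Multiplicative.ofAdd (w + w') = Multiplicative.ofAdd w * Multiplicative.ofAdd w'
    from rfl, map_mul]
  rfl

lemma aPow_add (g : H) (hg : g ≠ 1) (m m' : ℤ) :
    aPow g hg (m + m') = aPow g hg m * aPow g hg m' := by
  unfold aPow
  rw [← wreathBase_add, ← Finsupp.single_add, ← Finsupp.single_add]

lemma aPow_zero (g : H) (hg : g ≠ 1) : aPow g hg 0 = 1 := by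
  unfold aPow
  rw [Finsupp.single_zero, Finsupp.single_zero, wreathBase_zero]

lemma aPow_inv (g : H) (hg : g ≠ 1) (m : ℤ) : (aPow g hg m)⁻¹ = aPow g hg (-m) := by
  rw [eq_comm, eq_inv_iff_mul_eq_one, ← aPow_add]
  simp [aPow_zero]

lemma wreathRight_mul (x y : H) {A : Type*} [AddCommGroup A] :
    (wreathRight (x * y) : WreathProd A H) = wreathRight x * wreathRight y := map_mul _ _ _

lemma wreathRight_one {A : Type*} [AddCommGroup A] :
    (wreathRight (1 : H) : WreathProd A H) = 1 := map_one _

lemma wreathRight_inv (x : H) {A : Type*} [AddCommGroup A] :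
    (wreathRight x : WreathProd A H)⁻¹ = wreathRight x⁻¹ := (map_inv _ _).symm

lemma base_conj {A : Type*} [AddCommGroup A] (x : H) (v : A) :
    (wreathRight x⁻¹ * wreathBase (Finsupp.single 1 v) * wreathRight x : WreathProd A H)
      = wreathBase (Finsupp.single x v) := by
  apply wreath_ext
  · simp [wreathShift_single]
  · simp

lemma closure_genSetY (ℓ : H → ℕ) : Subgroup.closure (genSetY ℓ) = ⊤ := by
  rw [eq_top_iff]
  rintro v -
  set Y := genSetY ℓ with hY
  have ha : ∀ (g : H) (hg : g ≠ 1) (m : ℤ), aPow g hg m ∈ Subgroup.closure Y := by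
    intro g hg m
    have h1 : aPow g hg 1 ∈ Subgroup.closure Y :=
      Subgroup.subset_closure (Or.inl ⟨g, hg, rfl⟩)
    induction m using Int.induction_on with
    | zero => rw [aPow_zero]; exact one_mem _
    | succ n ih => rw [aPow_add]; exact mul_mem ih h1
    | pred n ih =>
        rw [show (-(n : ℤ) - 1) = (-(n : ℤ)) + (-1) by ring, aPow_add]
        exact mul_mem ih (by rw [show (-1 : ℤ) = -(1:ℤ) from rfl, ← aPow_inv]; exact inv_mem h1)
  have hr : ∀ x : H, (wreathRight x : WreathV H) ∈ Subgroup.closure Y := by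
    intro x
    by_cases hx : x = 1
    · rw [hx, wreathRight_one]; exact one_mem _
    · have h2 : aPow x hx ((ℓ x : ℤ)) * wreathRight x ∈ Subgroup.closure Y :=
        Subgroup.subset_closure (Or.inr ⟨x, hx, rfl⟩)
      have : (wreathRight x : WreathV H)
          = (aPow x hx ((ℓ x : ℤ)))⁻¹ * (aPow x hx ((ℓ x : ℤ)) * wreathRight x) := by
        rw [inv_mul_cancel_left]
      rw [this]
      exact mul_mem (inv_mem (ha _ _ _)) h2
  have hbs : ∀ (x : H) (v : {h : H // h ≠ 1} →₀ ℤ),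
      wreathBase (Finsupp.single x v) ∈ Subgroup.closure Y := by
    intro x v
    induction v using Finsupp.induction with
    | zero => rw [Finsupp.single_zero, wreathBase_zero]; exact one_mem _
    | single_add gB m v' _ _ ih =>
        rw [Finsupp.single_add, wreathBase_add]
        refine mul_mem ?_ ih
        rw [← base_conj]
        have : (wreathBase (Finsupp.single (1:H) (Finsupp.single gB m)) : WreathV H)
            = aPow gB.1 gB.2 m := by
          unfold aPow; congr
        rw [this]
        exact mul_mem (mul_mem (hr _) (ha _ _ _)) (hr _)
  have hb : ∀ w : H →₀ ({h : H // h ≠ 1} →₀ ℤ),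
      (wreathBase w : WreathV H) ∈ Subgroup.closure Y := by
    intro w
    induction w using Finsupp.induction with
    | zero => rw [wreathBase_zero]; exact one_mem _
    | single_add x v f _ _ ih => rw [wreathBase_add]; exact mul_mem (hbs _ _) ih
  have : v = wreathBase (wlamp v) * wreathRight (wrt v) := by
    apply wreath_ext
    · simp
    · simp
  rw [this]
  exact mul_mem (hb _) (hr _)

end Gen

section LemA
variable {H : Type*} [Group H]

lemma exists_pos_of_sum_pos : ∀ (l : List ℤ), 0 < l.sum → ∃ x ∈ l, 0 < x := by
  intro l
  induction l with
  | nil => intro h; simp at h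
  | cons a t ih =>
      intro h
      by_cases ha : 0 < a
      · exact ⟨a, List.mem_cons_self, ha⟩
      · have : 0 < t.sum := by
          rw [List.sum_cons] at h; omega
        obtain ⟨x, hx, hx2⟩ := ih this
        exact ⟨x, List.mem_cons_of_mem _ hx, hx2⟩

/-- flow term of an entry `(c, y, g)` : `c • (δ_y - δ_{g⁻¹ y})`. -/
noncomputable def flowTerm (p : ℤ × H × H) : H →₀ ℤ :=
  p.1 • (Finsupp.single p.2.1 (1:ℤ) - Finsupp.single (p.2.2⁻¹ * p.2.1) (1:ℤ))

lemma lemA {ℓ : H → ℕ} (hℓ : IsLengthFunction ℓ) :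
    ∀ (N : ℕ) (L : List (ℤ × H × H)) (a b : H),
      (L.map fun p => p.1.natAbs).sum = N →
      (L.map flowTerm).sum = Finsupp.single a 1 - Finsupp.single b 1 →
      ℓ (a * b⁻¹) ≤ (L.map fun p => p.1.natAbs * ℓ p.2.2).sum := by
  intro N
  induction N using Nat.strong_induction_on with
  | _ N IH =>
  intro L a b hN hsum
  by_cases hab : a = b
  · subst hab
    have h1 : ℓ (a * a⁻¹) = 0 := by
      rw [mul_inv_cancel]; exact (hℓ.1 1).mpr rfl
    omega
  · -- evaluate the flow identity at `a`
    have heval : ∀ (ls : List (H →₀ ℤ)) (x : H), (ls.sum) x = (ls.map fun f => f x).sum := by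
      intro ls x
      induction ls with
      | nil => simp
      | cons f t ih => simp [Finsupp.add_apply, ih]
    have hval : ((L.map fun p => flowTerm p a).sum : ℤ) = 1 := by
      have h1 := heval (L.map flowTerm) a
      rw [List.map_map, hsum] at h1
      rw [Finsupp.sub_apply, Finsupp.single_eq_same,
        Finsupp.single_eq_of_ne (fun hba => hab hba), sub_zero] at h1
      exact h1.symm
    obtain ⟨x, hxmem, hxpos⟩ := exists_pos_of_sum_pos _ (by rw [hval]; norm_num)
    obtain ⟨p, hpL, hpx⟩ := List.mem_map.mp hxmem
    rw [← hpx] at hxpos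
    clear hpx hxmem x hval
    obtain ⟨c, y, g⟩ := p
    simp only [flowTerm, Finsupp.smul_apply, Finsupp.sub_apply] at hxpos
    -- case analysis on which delta hits `a`
    have key : ∃ (a' : H) (s : ℤ),
        flowTerm (c - s, y, g)
          = flowTerm (c, y, g) - (Finsupp.single a 1 - Finsupp.single a' 1) ∧
        (c - s).natAbs + 1 = c.natAbs ∧ ℓ (a * a'⁻¹) ≤ ℓ g := by
      by_cases hy : y = a <;> by_cases hz : g⁻¹ * y = a
      · exfalso
        have e1 : (Finsupp.single y (1:ℤ)) a = 1 := by rw [hy]; exact Finsupp.single_eq_same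
        have e2 : (Finsupp.single (g⁻¹ * y) (1:ℤ)) a = 1 := by
          rw [hz]; exact Finsupp.single_eq_same
        rw [e1, e2] at hxpos
        simp at hxpos
      · have e1 : (Finsupp.single y (1:ℤ)) a = 1 := by rw [hy]; exact Finsupp.single_eq_same
        have e2 : (Finsupp.single (g⁻¹ * y) (1:ℤ)) a = 0 := Finsupp.single_eq_of_ne (Ne.symm hz)
        rw [e1, e2] at hxpos
        simp only [sub_zero, smul_eq_mul, mul_one] at hxpos
        refine ⟨g⁻¹ * y, 1, ?_, by omega, ?_⟩
        · have hst : ((1:ℤ)) • (Finsupp.single y (1:ℤ) - Finsupp.single (g⁻¹ * y) (1:ℤ))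
              = Finsupp.single a 1 - Finsupp.single (g⁻¹ * y) 1 := by rw [one_smul, hy]
          simp only [flowTerm, sub_smul, hst]
        · have : a * (g⁻¹ * y)⁻¹ = g := by rw [← hy]; group
          rw [this]
      · have e1 : (Finsupp.single y (1:ℤ)) a = 0 := Finsupp.single_eq_of_ne (Ne.symm hy)
        have e2 : (Finsupp.single (g⁻¹ * y) (1:ℤ)) a = 1 := by
          rw [hz]; exact Finsupp.single_eq_same
        rw [e1, e2] at hxpos
        simp only [zero_sub, smul_eq_mul, mul_neg, mul_one] at hxpos
        refine ⟨y, -1, ?_, by omega, ?_⟩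
        · have hst : ((-1:ℤ)) • (Finsupp.single y (1:ℤ) - Finsupp.single (g⁻¹ * y) (1:ℤ))
              = Finsupp.single a 1 - Finsupp.single y 1 := by
            rw [neg_smul, one_smul, neg_sub, hz]
          simp only [flowTerm, sub_smul, hst]
        · have : a * y⁻¹ = g⁻¹ := by rw [← hz]; group
          rw [this, hℓ.2.1]
      · exfalso
        have e1 : (Finsupp.single y (1:ℤ)) a = 0 := Finsupp.single_eq_of_ne (Ne.symm hy)
        have e2 : (Finsupp.single (g⁻¹ * y) (1:ℤ)) a = 0 := Finsupp.single_eq_of_ne (Ne.symm hz)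
        rw [e1, e2] at hxpos
        simp at hxpos
    obtain ⟨a', s, hdec, habs, hstep⟩ := key
    obtain ⟨L₁, L₂, rfl⟩ := List.append_of_mem hpL
    clear hxpos hpL
    have expandN : ∀ (w : (ℤ × H × H) → ℕ) (q : ℤ × H × H),
        ((L₁ ++ q :: L₂).map w).sum = (L₁.map w).sum + w q + (L₂.map w).sum := by
      intro w q
      rw [List.map_append, List.sum_append, List.map_cons, List.sum_cons]
      omega
    have expandF : ∀ (q : ℤ × H × H),
        ((L₁ ++ q :: L₂).map flowTerm).sum
          = (L₁.map flowTerm).sum + flowTerm q + (L₂.map flowTerm).sum := by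
      intro q
      rw [List.map_append, List.sum_append, List.map_cons, List.sum_cons]
      abel
    have hflow' : ((L₁ ++ (c - s, y, g) :: L₂).map flowTerm).sum
        = Finsupp.single a' 1 - Finsupp.single b 1 := by
      rw [expandF, hdec]
      rw [expandF] at hsum
      calc (L₁.map flowTerm).sum
            + (flowTerm (c, y, g) - (Finsupp.single a 1 - Finsupp.single a' 1))
            + (L₂.map flowTerm).sum
          = ((L₁.map flowTerm).sum + flowTerm (c, y, g) + (L₂.map flowTerm).sum)
            - (Finsupp.single a 1 - Finsupp.single a' 1) := by abel
        _ = (Finsupp.single a 1 - Finsupp.single b 1)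
            - (Finsupp.single a 1 - Finsupp.single a' 1) := by rw [hsum]
        _ = Finsupp.single a' 1 - Finsupp.single b 1 := by abel
    rw [expandN] at hN
    have hN' : ((L₁ ++ (c - s, y, g) :: L₂).map fun p => p.1.natAbs).sum = N - 1 := by
      rw [expandN]
      simp only at hN ⊢
      omega
    have hIH := IH (N - 1) (by omega) _ a' b hN' hflow'
    rw [expandN] at hIH
    have htri : ℓ (a * b⁻¹) ≤ ℓ (a * a'⁻¹) + ℓ (a' * b⁻¹) := by
      have h3 : a * b⁻¹ = (a * a'⁻¹) * (a' * b⁻¹) := by group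
      rw [h3]; exact hℓ.2.2 _ _
    rw [expandN]
    simp only at hIH ⊢
    have harith : (c - s).natAbs * ℓ g + ℓ g = c.natAbs * ℓ g := by
      rw [← habs]; ring
    omega

end LemA

section Lower
variable {H : Type*} [Group H]

noncomputable def depS (p : ℤ × H × {h : H // h ≠ 1}) : H →₀ ({h : H // h ≠ 1} →₀ ℤ) :=
  p.1 • Finsupp.single p.2.1 (Finsupp.single p.2.2 1)

noncomputable def depT (ℓ : H → ℕ) (p : ℤ × H × {h : H // h ≠ 1}) :
    H →₀ ({h : H // h ≠ 1} →₀ ℤ) :=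
  p.1 • Finsupp.single p.2.1 (Finsupp.single p.2.2 ((ℓ (p.2.2 : H) : ℤ)))

def eshift (c : H) (p : ℤ × H × {h : H // h ≠ 1}) : ℤ × H × {h : H // h ≠ 1} :=
  (p.1, p.2.1 * c, p.2.2)

noncomputable def flowTermB (p : ℤ × H × {h : H // h ≠ 1}) : H →₀ ℤ :=
  flowTerm (p.1, p.2.1, (p.2.2 : H))

/-- generic commuting of an additive equivalence with a mapped list sum -/
lemma shift_sum {M : Type*} [AddCommGroup M] {E' : Type*} (φ : M ≃+ M) (σ : E' → E')
    (F : E' → M) (hF : ∀ p, φ (F p) = F (σ p)) (T : List E') :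
    φ ((T.map F).sum) = ((T.map σ).map F).sum := by
  induction T with
  | nil => simp
  | cons p t ih =>
      simp only [List.map_cons, List.sum_cons, map_add, hF, ih]

lemma shift_flowTermB (b : H) (p : ℤ × H × {h : H // h ≠ 1}) :
    wreathShift b (flowTermB p) = flowTermB (eshift b⁻¹ p) := by
  obtain ⟨c, y, g⟩ := p
  simp only [flowTermB, flowTerm, eshift, map_zsmul, map_sub, wreathShift_single, inv_inv,
    mul_assoc]

lemma shift_depS (b : H) (p : ℤ × H × {h : H // h ≠ 1}) :
    wreathShift b (depS p) = depS (eshift b⁻¹ p) := by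
  obtain ⟨c, y, g⟩ := p
  simp only [depS, eshift, map_zsmul, wreathShift_single, inv_inv]

lemma shift_depT (ℓ : H → ℕ) (b : H) (p : ℤ × H × {h : H // h ≠ 1}) :
    wreathShift b (depT ℓ p) = depT ℓ (eshift b⁻¹ p) := by
  obtain ⟨c, y, g⟩ := p
  simp only [depT, eshift, map_zsmul, wreathShift_single, inv_inv]

lemma word_data (ℓ : H → ℕ) :
    ∀ (l : List (WreathV H)), (∀ x ∈ l, x ∈ genSetY ℓ ∨ x⁻¹ ∈ genSetY ℓ) →
    ∃ S T : List (ℤ × H × {h : H // h ≠ 1}),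
      (∀ p ∈ S, p.1 = 1 ∨ p.1 = -1) ∧
      S.length + T.length = l.length ∧
      (T.map flowTermB).sum
        = Finsupp.single (1:H) 1 - Finsupp.single ((wrt l.prod)⁻¹) 1 ∧
      wlamp l.prod = (S.map depS).sum + (T.map (depT ℓ)).sum := by
  intro l
  induction l with
  | nil =>
      intro _
      refine ⟨[], [], by simp, by simp, ?_, ?_⟩
      · rw [List.prod_nil]
        show (0 : H →₀ ℤ) = Finsupp.single (1:H) 1 - Finsupp.single ((1 : H)⁻¹) 1
        rw [inv_one, sub_self]
      · rw [List.prod_nil]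
        show (0 : H →₀ ({h : H // h ≠ 1} →₀ ℤ)) = 0 + 0
        rw [add_zero]
  | cons x l' ih =>
      intro hmem
      obtain ⟨S', T', hS'sgn, hlen', hflow', hlamp'⟩ :=
        ih (fun z hz => hmem z (List.mem_cons_of_mem _ hz))
      have hx := hmem x (List.mem_cons_self)
      -- uniform step helper
      have step : ∀ (Sx Tx : List (ℤ × H × {h : H // h ≠ 1})),
          (∀ p ∈ Sx, p.1 = 1 ∨ p.1 = -1) →
          Sx.length + Tx.length = 1 →
          ((Tx.map flowTermB).sum
              + (Finsupp.single ((wrt x)⁻¹) 1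
                  - Finsupp.single ((wrt l'.prod)⁻¹ * (wrt x)⁻¹) 1)
            = Finsupp.single (1:H) 1 - Finsupp.single ((wrt x * wrt l'.prod)⁻¹) 1) →
          (wlamp x = (Sx.map depS).sum + (Tx.map (depT ℓ)).sum) →
          ∃ S T : List (ℤ × H × {h : H // h ≠ 1}),
            (∀ p ∈ S, p.1 = 1 ∨ p.1 = -1) ∧
            S.length + T.length = (x :: l').length ∧
            (T.map flowTermB).sum
              = Finsupp.single (1:H) 1 - Finsupp.single ((wrt ((x :: l').prod))⁻¹) 1 ∧
            wlamp ((x :: l').prod) = (S.map depS).sum + (T.map (depT ℓ)).sum := by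
        intro Sx Tx hSx hlenx hflowx hlampx
        refine ⟨Sx ++ S'.map (eshift (wrt x)⁻¹), Tx ++ T'.map (eshift (wrt x)⁻¹), ?_, ?_, ?_, ?_⟩
        · intro p hp
          rcases List.mem_append.mp hp with h | h
          · exact hSx p h
          · obtain ⟨q, hq, rfl⟩ := List.mem_map.mp h
            exact hS'sgn q hq
        · simp only [List.length_append, List.length_map, List.length_cons]
          omega
        · rw [List.prod_cons, List.map_append, List.sum_append,
            ← shift_sum (wreathShift (wrt x)) (eshift (wrt x)⁻¹) flowTermB
              (shift_flowTermB (wrt x)) T',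
            hflow', map_sub, wreathShift_single, wreathShift_single, one_mul, wrt_mul]
          exact hflowx
        · rw [List.prod_cons, wlamp_mul, hlampx, hlamp',
            List.map_append, List.sum_append, List.map_append, List.sum_append,
            map_add,
            ← shift_sum (wreathShift (wrt x)) (eshift (wrt x)⁻¹) depS
              (shift_depS (wrt x)) S',
            ← shift_sum (wreathShift (wrt x)) (eshift (wrt x)⁻¹) (depT ℓ)
              (shift_depT ℓ (wrt x)) T']
          abel
      rcases hx with hx | hx
      · rcases hx with ⟨g, hg, rfl⟩ | ⟨g, hg, rfl⟩
        · -- x = aPow g hg 1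
          refine step [(1, 1, ⟨g, hg⟩)] [] (by simp) (by simp) ?_ ?_
          · simp only [List.map_nil, List.sum_nil, zero_add, wrt_aPow, inv_one, mul_one,
              one_mul]
          · simp only [List.map_cons, List.map_nil, List.sum_cons, List.sum_nil, add_zero,
              zero_add, depS, one_smul, wlamp_aPow]
        · -- x = aPow g hg (ℓ g) * wreathRight g
          refine step [] [(1, 1, ⟨g, hg⟩)] (by simp) (by simp) ?_ ?_
          · simp only [List.map_cons, List.map_nil, List.sum_cons, List.sum_nil, add_zero,
              flowTermB, flowTerm, one_smul, wrt_mul, wrt_aPow, wrt_right, one_mul, mul_one,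
              mul_inv_rev]
            abel
          · simp only [List.map_cons, List.map_nil, List.sum_cons, List.sum_nil, add_zero,
              zero_add, depT, one_smul, wlamp_mul, wlamp_aPow, wlamp_right, map_zero]
      · rcases hx with ⟨g, hg, hxeq⟩ | ⟨g, hg, hxeq⟩
        · -- x = (aPow g hg 1)⁻¹ = aPow g hg (-1)
          have hxe : x = aPow g hg (-1) := by
            rw [← inv_inv x, hxeq, aPow_inv]
          subst hxe
          refine step [(-1, 1, ⟨g, hg⟩)] [] (by simp) (by simp) ?_ ?_
          · simp only [List.map_nil, List.sum_nil, zero_add, wrt_aPow, inv_one, mul_one,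
              one_mul]
          · simp only [List.map_cons, List.map_nil, List.sum_cons, List.sum_nil, add_zero,
              zero_add, depS, wlamp_aPow]
            rw [Finsupp.smul_single, Finsupp.smul_single, smul_eq_mul, mul_one]
        · -- x = (aPow g hg (ℓ g) * wreathRight g)⁻¹
          have hxe : x = (aPow g hg ((ℓ g : ℤ)) * wreathRight g)⁻¹ := by
            rw [← inv_inv x, hxeq]
          subst hxe
          refine step [] [(-1, g, ⟨g, hg⟩)] (by simp) (by simp) ?_ ?_
          · simp only [List.map_cons, List.map_nil, List.sum_cons, List.sum_nil, add_zero,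
              flowTermB, flowTerm, neg_smul, one_smul, wrt_inv, wrt_mul, wrt_aPow, wrt_right,
              one_mul, mul_inv_rev, inv_inv, inv_mul_cancel]
            abel
          · have h1 : wlamp ((aPow g hg ((ℓ g : ℤ)) * wreathRight g)⁻¹ : WreathV H)
                = - wreathShift ((1 : H) * g)⁻¹
                    (Finsupp.single (1:H)
                      (Finsupp.single (⟨g, hg⟩ : {h : H // h ≠ 1}) ((ℓ g : ℤ)))) := by
              rw [wlamp_inv]
              simp only [wlamp_mul, wlamp_aPow, wlamp_right, map_zero, add_zero, wrt_mul,
                wrt_aPow, wrt_right, map_neg]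
            rw [h1, wreathShift_single]
            simp only [List.map_cons, List.map_nil, List.sum_cons, List.sum_nil, add_zero,
              zero_add, depT, one_mul, inv_inv, neg_smul, one_smul]

lemma regroup {K : Type*} {M : Type*} [AddCommGroup M] (F : K → M) :
    ∀ (T : List (ℤ × K)),
      (T.map fun p => p.1 • F p.2).sum
        = ((T.map fun p => Finsupp.single p.2 p.1).sum : K →₀ ℤ).sum (fun q n => n • F q) := by
  intro T
  induction T with
  | nil =>
      simp only [List.map_nil, List.sum_nil]
      rw [Finsupp.sum_zero_index]
  | cons p t ih =>
      simp only [List.map_cons, List.sum_cons]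
      rw [Finsupp.sum_add_index' (fun q => zero_smul ℤ (F q)) (fun q m n => add_smul m n (F q)),
        Finsupp.sum_single_index (zero_smul ℤ (F p.2)), ih]

lemma mass : ∀ (S : List (ℤ × H × {h : H // h ≠ 1})), (∀ p ∈ S, p.1 = 1 ∨ p.1 = -1) →
    ∀ (Q : Finset (H × {h : H // h ≠ 1})),
      (Q.sum fun q => ((((S.map depS).sum : H →₀ ({h : H // h ≠ 1} →₀ ℤ)) q.1) q.2).natAbs)
        ≤ S.length := by
  classical
  intro S
  induction S with
  | nil => intro _ Q; simp
  | cons p t ih =>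
      intro hsgn Q
      have hval : ∀ q : H × {h : H // h ≠ 1},
          (((depS p) q.1) q.2) = if (p.2.1, p.2.2) = q then p.1 else 0 := by
        intro q
        obtain ⟨c, y, gB⟩ := p
        obtain ⟨q1, q2⟩ := q
        simp only [depS, Finsupp.smul_apply]
        by_cases h1 : y = q1
        · subst h1
          rw [Finsupp.single_eq_same]
          by_cases h2 : gB = q2
          · subst h2
            rw [Finsupp.single_eq_same, if_pos rfl]
            simp
          · rw [Finsupp.single_eq_of_ne (Ne.symm h2), if_neg (by simp [h2])]
            simp
        · rw [Finsupp.single_eq_of_ne (Ne.symm h1)]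
          rw [if_neg (by simp [h1])]
          simp
      have habs1 : p.1.natAbs = 1 := by
        rcases hsgn p (List.mem_cons_self) with h | h <;> rw [h] <;> rfl
      calc (Q.sum fun q =>
              ((((p :: t).map depS).sum : H →₀ ({h : H // h ≠ 1} →₀ ℤ)) q.1 q.2).natAbs)
          = Q.sum fun q => (((depS p) q.1) q.2
              + (((t.map depS).sum : H →₀ ({h : H // h ≠ 1} →₀ ℤ)) q.1) q.2).natAbs := by
            apply Finset.sum_congr rfl
            intro q _
            rw [List.map_cons, List.sum_cons, Finsupp.add_apply, Finsupp.add_apply]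
        _ ≤ Q.sum fun q => (((depS p) q.1) q.2).natAbs
              + ((((t.map depS).sum : H →₀ ({h : H // h ≠ 1} →₀ ℤ)) q.1) q.2).natAbs := by
            apply Finset.sum_le_sum
            intro q _
            exact Int.natAbs_add_le _ _
        _ = (Q.sum fun q => (((depS p) q.1) q.2).natAbs)
              + Q.sum fun q =>
                ((((t.map depS).sum : H →₀ ({h : H // h ≠ 1} →₀ ℤ)) q.1) q.2).natAbs := by
            rw [Finset.sum_add_distrib]
        _ ≤ 1 + t.length := by
            have h2 : (Q.sum fun q => (((depS p) q.1) q.2).natAbs) ≤ 1 := by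
              have : (Q.sum fun q => (((depS p) q.1) q.2).natAbs)
                  = Q.sum fun q => if (p.2.1, p.2.2) = q then p.1.natAbs else 0 := by
                apply Finset.sum_congr rfl
                intro q _
                rw [hval q]
                by_cases h : (p.2.1, p.2.2) = q
                · rw [if_pos h, if_pos h]
                · rw [if_neg h, if_neg h]; rfl
              rw [this, Finset.sum_ite_eq]
              by_cases h : (p.2.1, p.2.2) ∈ Q
              · rw [if_pos h, habs1]
              · rw [if_neg h]; omega
            have h3 := ih (fun p hp => hsgn p (List.mem_cons_of_mem _ hp)) Q
            omega
        _ = (p :: t).length := by rw [List.length_cons]; omega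

lemma lower_bound {ℓ : H → ℕ} (hℓ : IsLengthFunction ℓ) (l : List (WreathV H))
    (hmem : ∀ x ∈ l, x ∈ genSetY ℓ ∨ x⁻¹ ∈ genSetY ℓ) (h : H) (hh : h ≠ 1)
    (hprod : l.prod = wreathRight h) : ℓ h + 1 ≤ l.length := by
  classical
  obtain ⟨S, T, hsgn, hlen, hflow, hlamp⟩ := word_data ℓ l hmem
  rw [hprod, wrt_right] at hflow
  rw [hprod, wlamp_right] at hlamp
  -- T is nonempty
  have hT : T ≠ [] := by
    intro hTnil
    rw [hTnil, List.map_nil, List.sum_nil] at hflow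
    have h1 := congrArg (fun f : H →₀ ℤ => f 1) hflow
    simp only [Finsupp.coe_zero, Pi.zero_apply, Finsupp.sub_apply, Finsupp.single_eq_same] at h1
    rw [Finsupp.single_eq_of_ne (Ne.symm (inv_ne_one.mpr hh))] at h1
    omega
  set c : (H × {h : H // h ≠ 1}) →₀ ℤ := (T.map fun p => Finsupp.single p.2 p.1).sum with hc
  have hflowc : c.sum (fun q n =>
        n • (Finsupp.single q.1 (1:ℤ) - Finsupp.single ((q.2 : H)⁻¹ * q.1) 1))
      = Finsupp.single (1:H) 1 - Finsupp.single (h⁻¹) 1 := by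
    rw [hc, ← regroup]
    exact hflow
  have hlampc : (S.map depS).sum
      + c.sum (fun q n => n • Finsupp.single q.1
          (Finsupp.single q.2 ((ℓ (q.2 : H) : ℤ)))) = 0 := by
    rw [hc, ← regroup]
    exact hlamp.symm
  -- pointwise computation of the `T`-deposit
  have hFv : ∀ q0 : H × {h : H // h ≠ 1}, q0 ∈ c.support →
      ((c.sum (fun q n => n • Finsupp.single q.1
          (Finsupp.single q.2 ((ℓ (q.2 : H) : ℤ))))) q0.1) q0.2
        = c q0 * (ℓ (q0.2 : H) : ℤ) := by
    intro q0 hq0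
    rw [Finsupp.sum, Finsupp.finset_sum_apply, Finsupp.finset_sum_apply]
    have : ∀ q ∈ c.support,
        (((c q • Finsupp.single q.1
            (Finsupp.single q.2 ((ℓ (q.2 : H) : ℤ)))) : H →₀ ({h : H // h ≠ 1} →₀ ℤ)) q0.1) q0.2
          = if q = q0 then c q0 * (ℓ (q0.2 : H) : ℤ) else 0 := by
      intro q _
      obtain ⟨q1, q2⟩ := q
      obtain ⟨r1, r2⟩ := q0
      simp only [Finsupp.smul_apply]
      by_cases h1 : q1 = r1
      · subst h1
        rw [Finsupp.single_eq_same]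
        by_cases h2 : q2 = r2
        · subst h2
          rw [Finsupp.single_eq_same, if_pos rfl]
          simp
        · rw [Finsupp.single_eq_of_ne (Ne.symm h2), if_neg (by simp [h2])]
          simp
      · rw [Finsupp.single_eq_of_ne (Ne.symm h1), if_neg (by simp [h1])]
        simp
    rw [Finset.sum_congr rfl this, Finset.sum_ite_eq', if_pos hq0]
  -- weight bound
  have hup : (c.support.sum fun q => (c q).natAbs * ℓ (q.2 : H)) ≤ S.length := by
    have h1 : ∀ q ∈ c.support,
        (c q).natAbs * ℓ (q.2 : H)
          = ((((S.map depS).sum : H →₀ ({h : H // h ≠ 1} →₀ ℤ)) q.1) q.2).natAbs := by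
      intro q hq
      have h2 := congrArg (fun f : H →₀ ({h : H // h ≠ 1} →₀ ℤ) => (f q.1) q.2) hlampc
      simp only [Finsupp.add_apply, Finsupp.coe_zero, Pi.zero_apply] at h2
      rw [hFv q hq] at h2
      have h3 : (((S.map depS).sum : H →₀ ({h : H // h ≠ 1} →₀ ℤ)) q.1) q.2
          = -(c q * (ℓ (q.2 : H) : ℤ)) := by omega
      rw [h3, Int.natAbs_neg, Int.natAbs_mul, Int.natAbs_natCast]
    rw [Finset.sum_congr rfl h1]
    exact mass S hsgn c.support
  -- apply Lemma A
  have hflowLC : ((c.support.toList.map fun q => ((c q, q.1, (q.2 : H)) : ℤ × H × H)).map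
        flowTerm).sum = Finsupp.single (1:H) 1 - Finsupp.single (h⁻¹) 1 := by
    rw [List.map_map]
    have h1 : (c.support.toList.map
          (flowTerm ∘ fun q => ((c q, q.1, (q.2 : H)) : ℤ × H × H))).sum
        = c.support.sum fun q =>
            c q • (Finsupp.single q.1 (1:ℤ) - Finsupp.single ((q.2 : H)⁻¹ * q.1) 1) :=
      Finset.sum_map_toList _ _
    rw [h1]
    exact hflowc
  have hweight := lemA hℓ _ (c.support.toList.map fun q => ((c q, q.1, (q.2 : H)) : ℤ × H × H))
    1 h⁻¹ rfl hflowLC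
  rw [List.map_map] at hweight
  have h4 : (c.support.toList.map
        ((fun p : ℤ × H × H => p.1.natAbs * ℓ p.2.2)
          ∘ fun q => ((c q, q.1, (q.2 : H)) : ℤ × H × H))).sum
      = c.support.sum fun q => (c q).natAbs * ℓ (q.2 : H) :=
    Finset.sum_map_toList _ _
  rw [h4] at hweight
  have h5 : (1 : H) * (h⁻¹)⁻¹ = h := by group
  rw [h5] at hweight
  have h6 : 1 ≤ T.length := by
    cases T with
    | nil => exact absurd rfl hT
    | cons a t => simp
  omega

end Lower

lemma aPow_pow {H : Type*} [Group H] (g : H) (hg : g ≠ 1) (c : ℤ) :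
    ∀ n : ℕ, (aPow g hg c) ^ n = aPow g hg (n * c) := by
  intro n
  induction n with
  | zero => rw [pow_zero]; norm_num [aPow_zero]
  | succ n ih =>
      rw [pow_succ, ih, ← aPow_add]
      congr 1
      push_cast
      ring


/-- `Y` generates `V = A ≀ H` and, for every non-trivial `h ∈ H ≤ V`,
`|h|_Y = ℓ(h) + 1`. -/
theorem wordLength_wrt_Y_eq {H : Type} [Group H] (ℓ : H → ℕ)
    (hℓ : IsLengthFunction ℓ) :
    Subgroup.closure (genSetY ℓ) = ⊤ ∧
    ∀ (h : H), h ≠ 1 → wordLength (genSetY ℓ) (wreathRight h : WreathV H) = ℓ h + 1 := by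
  refine ⟨closure_genSetY ℓ, ?_⟩
  intro h hh
  have hmem : (ℓ h + 1) ∈ {n | ∃ l : List (WreathV H), l.length = n ∧
      (∀ x ∈ l, x ∈ genSetY ℓ ∨ x⁻¹ ∈ genSetY ℓ) ∧ l.prod = wreathRight h} := by
    refine ⟨List.replicate (ℓ h) (aPow h hh (-1))
      ++ [aPow h hh ((ℓ h : ℤ)) * wreathRight h], ?_, ?_, ?_⟩
    · rw [List.length_append, List.length_replicate, List.length_singleton]
    · intro x hx
      rcases List.mem_append.mp hx with hx | hx
      · have hxe := List.eq_of_mem_replicate hx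
        right
        rw [hxe, aPow_inv]
        exact Or.inl ⟨h, hh, by norm_num⟩
      · left
        rw [List.mem_singleton.mp hx]
        exact Or.inr ⟨h, hh, rfl⟩
    · rw [List.prod_append, List.prod_replicate, aPow_pow, List.prod_singleton,
        ← mul_assoc, ← aPow_add]
      have : (ℓ h : ℤ) * (-1) + (ℓ h : ℤ) = 0 := by ring
      rw [this, aPow_zero, one_mul]
  apply le_antisymm
  · exact Nat.sInf_le hmem
  · refine le_csInf ⟨_, hmem⟩ ?_
    rintro n ⟨l, rfl, hlm, hlp⟩
    exact lower_bound hℓ l hlm h hh hlp
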